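/- arXiv:2305.16152 — 2 statements merged into one kernel-verified Lean document; each statement's English description precedes it below -/
import Mathlib

section
/- Let γ, γ' > 0 with γ ≠ γ'. Suppose β* maximizes F_γ over ℝ^m with E[V(β*)] − V₀S₀ = 2γ·Var(V(β*)) and Var(V(β*)) > 0, and suppose β' maximizes F_{γ'} over ℝ^m with E[V(β')] − V₀S₀ = 2γ'·Var(V(β')) and Var(V(β')) > 0. Then Sharpe(β*) = Sharpe(β'): optimal portfolios for different risk aversions have the same Sharpe ratio. -/
open MeasureTheory ProbabilityTheory
open scoped InnerProductSpace

/-- The random portfolio value `R(β) = V₀ + ⟨D, β⟩ − ν ∑_j |⟨K_j, β⟩|`. -/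
noncomputable def Rport {Ω : Type*} {m q : ℕ} (V0 ν : ℝ)
    (D : Ω → EuclideanSpace ℝ (Fin m)) (K : Fin q → Ω → EuclideanSpace ℝ (Fin m))
    (β : EuclideanSpace ℝ (Fin m)) (ω : Ω) : ℝ :=
  V0 + ⟪D ω, β⟫_ℝ - ν * ∑ j, |⟪K j ω, β⟫_ℝ|

/-- The terminal portfolio value `V(β) = R(β) · S₀`. -/
noncomputable def Vport {Ω : Type*} {m q : ℕ} (V0 S0 ν : ℝ)
    (D : Ω → EuclideanSpace ℝ (Fin m)) (K : Fin q → Ω → EuclideanSpace ℝ (Fin m))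
    (β : EuclideanSpace ℝ (Fin m)) (ω : Ω) : ℝ :=
  Rport V0 ν D K β ω * S0

/-- The Sharpe ratio `Sharpe(β) = (E[V(β)] − V₀S₀)/√Var(V(β))`. -/
noncomputable def sharpeRatio {Ω : Type*} [MeasurableSpace Ω] (P : Measure Ω) {m q : ℕ}
    (V0 S0 ν : ℝ) (D : Ω → EuclideanSpace ℝ (Fin m)) (K : Fin q → Ω → EuclideanSpace ℝ (Fin m))
    (β : EuclideanSpace ℝ (Fin m)) : ℝ :=
  ((∫ ω, Vport V0 S0 ν D K β ω ∂P) - V0 * S0) /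
    Real.sqrt (variance (Vport V0 S0 ν D K β) P)

/-- The mean–variance objective `F_γ(β) = E[V(β)] − γ Var(V(β))`. -/
noncomputable def Fobj {Ω : Type*} [MeasurableSpace Ω] (P : Measure Ω) {m q : ℕ}
    (V0 S0 ν : ℝ) (D : Ω → EuclideanSpace ℝ (Fin m)) (K : Fin q → Ω → EuclideanSpace ℝ (Fin m))
    (γ : ℝ) (β : EuclideanSpace ℝ (Fin m)) : ℝ :=
  (∫ ω, Vport V0 S0 ν D K β ω ∂P) - γ * variance (Vport V0 S0 ν D K β) P

/-- `β` is a `γ`-zero-gradient point: `P(⟨K_j, β⟩ = 0) = 0` for every `j` and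
`E[(D − ν ∑_j sign(⟨K_j, β⟩) K_j) · S₀ · (1 − 2γS₀(R(β) − E[R(β)]))] = 0` in `ℝ^m`. -/
def ZeroGrad {Ω : Type*} [MeasurableSpace Ω] (P : Measure Ω) {m q : ℕ}
    (V0 S0 ν : ℝ) (D : Ω → EuclideanSpace ℝ (Fin m)) (K : Fin q → Ω → EuclideanSpace ℝ (Fin m))
    (γ : ℝ) (β : EuclideanSpace ℝ (Fin m)) : Prop :=
  (∀ j, P {ω | ⟪K j ω, β⟫_ℝ = 0} = 0) ∧
  (∫ ω, (S0 * (1 - 2 * γ * S0 * (Rport V0 ν D K β ω - ∫ ω', Rport V0 ν D K β ω' ∂P))) •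
      (D ω - ν • ∑ j, Real.sign ⟪K j ω, β⟫_ℝ • K j ω) ∂P) = 0


section Aux
variable {Ω : Type*} [MeasurableSpace Ω] {P : Measure Ω} [IsProbabilityMeasure P]

lemma my_variance_add_const {X : Ω → ℝ} (hX : Integrable X P) (c : ℝ) :
    variance (fun ω => X ω + c) P = variance X P := by
  unfold ProbabilityTheory.variance ProbabilityTheory.evariance
  congr 1
  have h : (∫ ω, (X ω + c) ∂P) = (∫ ω, X ω ∂P) + c := by
    rw [integral_add hX (integrable_const c), integral_const]; simp
  refine lintegral_congr fun ω => ?_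
  rw [h]; ring_nf

lemma my_variance_affine {X : Ω → ℝ} (hX : Integrable X P) (t c : ℝ) :
    variance (fun ω => t * X ω + c) P = t ^ 2 * variance X P := by
  rw [my_variance_add_const (hX.const_mul t) c]
  exact variance_smul t X P

lemma my_memL2 {m q : ℕ} (V0 S0 ν : ℝ)
    (D : Ω → EuclideanSpace ℝ (Fin m)) (K : Fin q → Ω → EuclideanSpace ℝ (Fin m))
    (hD : MemLp D 2 P) (hK : ∀ j, MemLp (K j) 2 P) (β : EuclideanSpace ℝ (Fin m)) :
    MemLp (Vport V0 S0 ν D K β) 2 P := by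
  have h1 : MemLp (fun ω => ⟪D ω, β⟫_ℝ) 2 P := by
    have he : (fun ω => ⟪D ω, β⟫_ℝ) = fun a => ⟪β, D a⟫_ℝ :=
      funext fun ω => real_inner_comm _ _
    rw [he]; exact MemLp.const_inner (𝕜 := ℝ) β hD
  have h2 : MemLp (fun ω => ν * ∑ j, |⟪K j ω, β⟫_ℝ|) 2 P := by
    refine MemLp.const_mul ?_ ν
    refine memLp_finset_sum _ (fun j _ => ?_)
    have h := (MemLp.const_inner (𝕜 := ℝ) β (hK j)).norm
    simp only [Real.norm_eq_abs] at h
    have he : (fun ω => |⟪K j ω, β⟫_ℝ|) = fun x => |⟪β, K j x⟫_ℝ| :=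
      funext fun ω => by rw [real_inner_comm]
    exact he ▸ h
  have h3 : MemLp (Rport V0 ν D K β) 2 P := by
    exact ((memLp_const (p := 2) (μ := P) V0).add h1).sub h2
  have he : Vport V0 S0 ν D K β = fun x => S0 * Rport V0 ν D K β x :=
    funext fun ω => mul_comm _ _
  exact he ▸ h3.const_mul S0

lemma my_scale {m q : ℕ} (V0 S0 ν : ℝ)
    (D : Ω → EuclideanSpace ℝ (Fin m)) (K : Fin q → Ω → EuclideanSpace ℝ (Fin m))
    (β : EuclideanSpace ℝ (Fin m)) {t : ℝ} (ht : 0 ≤ t) (ω : Ω) :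
    Vport V0 S0 ν D K (t • β) ω = t * Vport V0 S0 ν D K β ω + (1 - t) * (V0 * S0) := by
  simp only [Vport, Rport, inner_smul_right, abs_mul, abs_of_nonneg ht, ← Finset.mul_sum]
  ring

lemma my_ineq {γ γ' A B Es E' c : ℝ} (hγ : 0 < γ) (hγ' : 0 < γ')
    (e1 : (γ' / γ) * E' + (1 - γ' / γ) * c - γ * ((γ' / γ) ^ 2 * B) ≤ Es - γ * A)
    (hid : Es - c = 2 * γ * A) (hid' : E' - c = 2 * γ' * B) : γ' ^ 2 * B ≤ γ ^ 2 * A := by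
  obtain ⟨t, ht, htpos⟩ : ∃ t, γ' = γ * t ∧ 0 < t :=
    ⟨γ' / γ, by field_simp, by positivity⟩
  have hdiv : γ' / γ = t := by rw [ht]; field_simp
  rw [hdiv] at e1
  rw [ht] at hid' ⊢
  have s2 : E' = c + 2 * (γ * t) * B := by linarith
  have s3 : Es = c + 2 * γ * A := by linarith
  rw [s2, s3] at e1
  have s4 : γ * (t ^ 2 * B) ≤ γ * A := by nlinarith [e1]
  have s5 : t ^ 2 * B ≤ A := (mul_le_mul_iff_right₀ hγ).mp s4
  nlinarith [s5, sq_nonneg γ]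

end Aux

/-- optimal portfolios for different risk aversions have the same Sharpe ratio. -/
theorem stmt10 {Ω : Type*} [MeasurableSpace Ω] (P : Measure Ω) [IsProbabilityMeasure P]
    {m q : ℕ} (hm : 0 < m) (hq : 0 < q)
    (V0 S0 ν : ℝ) (hV0 : 0 < V0) (hS0 : 0 < S0) (hν : 0 ≤ ν)
    (D : Ω → EuclideanSpace ℝ (Fin m)) (K : Fin q → Ω → EuclideanSpace ℝ (Fin m))
    (hD : MemLp D 2 P) (hK : ∀ j, MemLp (K j) 2 P)
    (γ γ' : ℝ) (hγ : 0 < γ) (hγ' : 0 < γ') (hne : γ ≠ γ')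
    (βstar β' : EuclideanSpace ℝ (Fin m))
    (hmax : ∀ β : EuclideanSpace ℝ (Fin m),
      Fobj P V0 S0 ν D K γ β ≤ Fobj P V0 S0 ν D K γ βstar)
    (hid : (∫ ω, Vport V0 S0 ν D K βstar ω ∂P) - V0 * S0
      = 2 * γ * variance (Vport V0 S0 ν D K βstar) P)
    (hvar : 0 < variance (Vport V0 S0 ν D K βstar) P)
    (hmax' : ∀ β : EuclideanSpace ℝ (Fin m),
      Fobj P V0 S0 ν D K γ' β ≤ Fobj P V0 S0 ν D K γ' β')
    (hid' : (∫ ω, Vport V0 S0 ν D K β' ω ∂P) - V0 * S0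
      = 2 * γ' * variance (Vport V0 S0 ν D K β') P)
    (hvar' : 0 < variance (Vport V0 S0 ν D K β') P) :
    sharpeRatio P V0 S0 ν D K βstar = sharpeRatio P V0 S0 ν D K β' := by
  
  have hint : ∀ β, Integrable (Vport V0 S0 ν D K β) P :=
    fun β => (my_memL2 V0 S0 ν D K hD hK β).integrable one_le_two
  have key : ∀ (c : ℝ) (β : EuclideanSpace ℝ (Fin m)) (t : ℝ), 0 ≤ t →
      Fobj P V0 S0 ν D K c (t • β)
        = t * (∫ ω, Vport V0 S0 ν D K β ω ∂P) + (1 - t) * (V0 * S0)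
          - c * (t ^ 2 * variance (Vport V0 S0 ν D K β) P) := by
    intro c β t ht
    have hfe : Vport V0 S0 ν D K (t • β)
        = fun ω => t * Vport V0 S0 ν D K β ω + (1 - t) * (V0 * S0) :=
      funext fun ω => my_scale V0 S0 ν D K β ht ω
    unfold Fobj
    rw [hfe, my_variance_affine (hint β) t _,
      integral_add ((hint β).const_mul t) (integrable_const _),
      MeasureTheory.integral_const_mul, integral_const]
    simp
  have e1 := hmax ((γ' / γ) • β')
  rw [key γ β' (γ' / γ) (by positivity)] at e1
  have e2 := hmax' ((γ / γ') • βstar)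
  rw [key γ' βstar (γ / γ') (by positivity)] at e2
  unfold Fobj at e1 e2
  have hγ0 : γ ≠ 0 := ne_of_gt hγ
  have hγ'0 : γ' ≠ 0 := ne_of_gt hγ'
  have hAB : γ ^ 2 * variance (Vport V0 S0 ν D K βstar) P
      = γ' ^ 2 * variance (Vport V0 S0 ν D K β') P :=
    le_antisymm (my_ineq hγ' hγ e2 hid' hid) (my_ineq hγ hγ' e1 hid hid')
  have eA := Real.mul_self_sqrt hvar.le
  have eB := Real.mul_self_sqrt hvar'.le
  have key2 : γ * Real.sqrt (variance (Vport V0 S0 ν D K βstar) P)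
      = γ' * Real.sqrt (variance (Vport V0 S0 ν D K β') P) := by
    have h1 : γ * Real.sqrt (variance (Vport V0 S0 ν D K βstar) P)
        = Real.sqrt (γ ^ 2 * variance (Vport V0 S0 ν D K βstar) P) := by
      rw [Real.sqrt_mul (sq_nonneg γ), Real.sqrt_sq hγ.le]
    have h2 : γ' * Real.sqrt (variance (Vport V0 S0 ν D K β') P)
        = Real.sqrt (γ' ^ 2 * variance (Vport V0 S0 ν D K β') P) := by
      rw [Real.sqrt_mul (sq_nonneg γ'), Real.sqrt_sq hγ'.le]
    rw [h1, h2, hAB]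
  have hsA : (0:ℝ) < Real.sqrt (variance (Vport V0 S0 ν D K βstar) P) :=
    Real.sqrt_pos.mpr hvar
  have hsB : (0:ℝ) < Real.sqrt (variance (Vport V0 S0 ν D K β') P) :=
    Real.sqrt_pos.mpr hvar'
  unfold sharpeRatio
  rw [hid, hid', div_eq_div_iff hsA.ne' hsB.ne']
  linear_combination (-2*γ*Real.sqrt (variance (Vport V0 S0 ν D K β') P)) * eA
    + (2*γ'*Real.sqrt (variance (Vport V0 S0 ν D K βstar) P)) * eB
    + (2*Real.sqrt (variance (Vport V0 S0 ν D K βstar) P)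
        * Real.sqrt (variance (Vport V0 S0 ν D K β') P)) * key2
end

section
/- The function (β, θ) ↦ G_γ(β, θ) is differentiable on Z × ℝ and its gradient is obtained by differentiating under the expectation: for every (β, θ) ∈ Z × ℝ, ∇_β G_γ(β, θ) = E[(D − ν ∑_{j=1}^q sign(⟨K_j, β⟩)·K_j)·S₀·(1 − 2γS₀(R(β) − θ))] and ∂_θ G_γ(β, θ) = 2γ·S₀²·(E[R(β)] − θ). -/
open MeasureTheory ProbabilityTheory
open scoped InnerProductSpace

/-- The objective `G_γ(β, θ) = E[R(β)·S₀ − γ((R(β) − θ)·S₀)²]`. -/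
noncomputable def Gobj {Ω : Type*} [MeasurableSpace Ω] (P : Measure Ω) {m q : ℕ}
    (V0 S0 ν : ℝ) (D : Ω → EuclideanSpace ℝ (Fin m)) (K : Fin q → Ω → EuclideanSpace ℝ (Fin m))
    (γ : ℝ) (β : EuclideanSpace ℝ (Fin m)) (θ : ℝ) : ℝ :=
  ∫ ω, (Rport V0 ν D K β ω * S0 - γ * ((Rport V0 ν D K β ω - θ) * S0) ^ 2) ∂P

private lemma measurable_realSign : Measurable Real.sign := by
  unfold Real.sign
  exact Measurable.ite (measurableSet_lt measurable_id measurable_const) measurable_const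
    (Measurable.ite (measurableSet_lt measurable_const measurable_id) measurable_const
      measurable_const)

private lemma abs_realSign_le_one (x : ℝ) : |Real.sign x| ≤ 1 := by
  rcases Real.sign_apply_eq x with h | h | h <;> rw [h] <;> norm_num

private lemma hasDerivAt_abs_realSign {x : ℝ} (hx : x ≠ 0) :
    HasDerivAt (fun y : ℝ => |y|) (Real.sign x) x := by
  rcases hx.lt_or_gt with h | h
  · simpa [Real.sign_of_neg h] using hasDerivAt_abs_neg h
  · simpa [Real.sign_of_pos h] using hasDerivAt_abs_pos h

set_option maxHeartbeats 1000000 in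
/-- `(β, θ) ↦ G_γ(β, θ)` is differentiable on `Z × ℝ`, with gradient in `β` equal
to `E[(D − ν ∑_j sign(⟨K_j, β⟩) K_j) · S₀ · (1 − 2γS₀(R(β) − θ))]` and partial derivative in `θ`
equal to `2γS₀²(E[R(β)] − θ)`. -/
theorem stmt12 {Ω : Type*} [MeasurableSpace Ω] (P : Measure Ω) [IsProbabilityMeasure P]
    {m q : ℕ} (hm : 0 < m) (hq : 0 < q)
    (V0 S0 ν : ℝ) (hV0 : 0 < V0) (hS0 : 0 < S0) (hν : 0 ≤ ν)
    (D : Ω → EuclideanSpace ℝ (Fin m)) (K : Fin q → Ω → EuclideanSpace ℝ (Fin m))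
    (hD : ∀ p : ℕ, 1 ≤ p → MemLp D (p : ENNReal) P)
    (hK : ∀ j, ∀ p : ℕ, 1 ≤ p → MemLp (K j) (p : ENNReal) P)
    (Z : Set (EuclideanSpace ℝ (Fin m))) (hZopen : IsOpen Z)
    (hZ : ∀ β ∈ Z, ∀ j, P {ω | ⟪K j ω, β⟫_ℝ = 0} = 0)
    (γ : ℝ) (hγ : 0 < γ) :
    ∀ β ∈ Z, ∀ θ : ℝ,
      DifferentiableAt ℝ
        (fun p : EuclideanSpace ℝ (Fin m) × ℝ => Gobj P V0 S0 ν D K γ p.1 p.2) (β, θ) ∧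
      HasGradientAt (fun b : EuclideanSpace ℝ (Fin m) => Gobj P V0 S0 ν D K γ b θ)
        (∫ ω, (S0 * (1 - 2 * γ * S0 * (Rport V0 ν D K β ω - θ))) •
          (D ω - ν • ∑ j, Real.sign ⟪K j ω, β⟫_ℝ • K j ω) ∂P) β ∧
      HasDerivAt (fun t : ℝ => Gobj P V0 S0 ν D K γ β t)
        (2 * γ * S0 ^ 2 * ((∫ ω, Rport V0 ν D K β ω ∂P) - θ)) θ := by
  intro β hβ θ
  classical
  -- measurability basics
  have hDm : AEStronglyMeasurable D P := (hD 1 le_rfl).aestronglyMeasurable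
  have hKm : ∀ j, AEStronglyMeasurable (K j) P := fun j => (hK j 1 le_rfl).aestronglyMeasurable
  have hinnm : ∀ (b : EuclideanSpace ℝ (Fin m)) (f : Ω → EuclideanSpace ℝ (Fin m)),
      AEStronglyMeasurable f P → AEStronglyMeasurable (fun ω => ⟪f ω, b⟫_ℝ) P := by
    intro b f hf
    exact (continuous_id.inner continuous_const).comp_aestronglyMeasurable hf
  have hRm : ∀ b, AEStronglyMeasurable (Rport V0 ν D K b) P := by
    intro b
    refine (aestronglyMeasurable_const.add (hinnm b D hDm)).sub
      ((Finset.aestronglyMeasurable_fun_sum _ fun j _ => ?_).const_mul ν)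
    simpa [Real.norm_eq_abs] using (hinnm b (K j) (hKm j)).norm
  -- the dominating function L
  set L : Ω → ℝ := fun ω => ‖D ω‖ + ν * ∑ j, ‖K j ω‖ with hLdef
  have hLnn : ∀ ω, 0 ≤ L ω := fun ω =>
    add_nonneg (norm_nonneg _) (mul_nonneg hν (Finset.sum_nonneg fun _ _ => norm_nonneg _))
  have hL2 : MemLp L 2 P := by
    refine ((hD 2 one_le_two).norm.add ?_)
    exact (memLp_finset_sum _ fun j _ => (hK j 2 one_le_two).norm).const_mul ν
  have hL1 : Integrable L P := hL2.integrable one_le_two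
  have hL1sq : Integrable (fun ω => (1 + L ω) ^ 2) P := by
    have : MemLp (fun ω => 1 + L ω) 2 P := (memLp_const (1 : ℝ)).add hL2
    exact this.integrable_sq
  -- Lipschitz estimate for Rport
  have hRlip : ∀ (b b' : EuclideanSpace ℝ (Fin m)) (ω : Ω),
      |Rport V0 ν D K b ω - Rport V0 ν D K b' ω| ≤ L ω * ‖b - b'‖ := by
    intro b b' ω
    have h1 : Rport V0 ν D K b ω - Rport V0 ν D K b' ω
        = ⟪D ω, b - b'⟫_ℝ - ν * ∑ j, (|⟪K j ω, b⟫_ℝ| - |⟪K j ω, b'⟫_ℝ|) := by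
      simp only [Rport, inner_sub_right, Finset.sum_sub_distrib, mul_sub]
      ring
    rw [h1]
    have h2 : |⟪D ω, b - b'⟫_ℝ| ≤ ‖D ω‖ * ‖b - b'‖ := abs_real_inner_le_norm _ _
    have h3 : ∀ j : Fin q, |(|⟪K j ω, b⟫_ℝ| - |⟪K j ω, b'⟫_ℝ|)| ≤ ‖K j ω‖ * ‖b - b'‖ := by
      intro j
      refine (abs_abs_sub_abs_le_abs_sub _ _).trans ?_
      rw [← inner_sub_right]
      exact abs_real_inner_le_norm _ _
    calc |⟪D ω, b - b'⟫_ℝ - ν * ∑ j, (|⟪K j ω, b⟫_ℝ| - |⟪K j ω, b'⟫_ℝ|)|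
        ≤ |⟪D ω, b - b'⟫_ℝ| + |ν * ∑ j, (|⟪K j ω, b⟫_ℝ| - |⟪K j ω, b'⟫_ℝ|)| := abs_sub _ _
      _ ≤ ‖D ω‖ * ‖b - b'‖ + ν * ∑ j, ‖K j ω‖ * ‖b - b'‖ := by
          refine add_le_add h2 ?_
          rw [abs_mul, abs_of_nonneg hν]
          refine mul_le_mul_of_nonneg_left ?_ hν
          exact (Finset.abs_sum_le_sum_abs _ _).trans (Finset.sum_le_sum fun j _ => h3 j)
      _ = L ω * ‖b - b'‖ := by rw [hLdef, ← Finset.sum_mul]; ring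
  have hR0 : ∀ ω, Rport V0 ν D K 0 ω = V0 := by
    intro ω; simp [Rport]
  have hRb : ∀ (b : EuclideanSpace ℝ (Fin m)) (ω : Ω),
      |Rport V0 ν D K b ω| ≤ V0 + L ω * ‖b‖ := by
    intro b ω
    have := hRlip b 0 ω
    rw [hR0 ω, sub_zero] at this
    have h2 : |Rport V0 ν D K b ω| - |V0| ≤ |Rport V0 ν D K b ω - V0| :=
      abs_sub_abs_le_abs_sub _ _
    have h3 : |V0| = V0 := abs_of_pos hV0
    linarith
  have hRp2 : ∀ b, MemLp (Rport V0 ν D K b) 2 P := by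
    intro b
    refine MemLp.of_le ((memLp_const V0).add (hL2.const_mul ‖b‖)) (hRm b) (ae_of_all _ fun ω => ?_)
    rw [Real.norm_eq_abs, Real.norm_eq_abs]
    refine (hRb b ω).trans ?_
    have h4 : V0 + L ω * ‖b‖ = V0 + ‖b‖ * L ω := by ring
    rw [h4]
    exact le_abs_self _
  have hRint : Integrable (Rport V0 ν D K β) P := (hRp2 β).integrable one_le_two
  -- the integrand F and its pointwise derivative F'
  set F : (EuclideanSpace ℝ (Fin m) × ℝ) → Ω → ℝ := fun p ω =>
    Rport V0 ν D K p.1 ω * S0 - γ * ((Rport V0 ν D K p.1 ω - p.2) * S0) ^ 2 with hFdef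
  set w : Ω → EuclideanSpace ℝ (Fin m) :=
    fun ω => D ω - ν • ∑ j, Real.sign ⟪K j ω, β⟫_ℝ • K j ω with hwdef
  set a : Ω → ℝ := fun ω => S0 * (1 - 2 * γ * S0 * (Rport V0 ν D K β ω - θ)) with hadef
  set F' : Ω → (EuclideanSpace ℝ (Fin m) × ℝ) →L[ℝ] ℝ := fun ω =>
    a ω • ((innerSL ℝ (w ω)).comp (ContinuousLinearMap.fst ℝ (EuclideanSpace ℝ (Fin m)) ℝ)) +
      (2 * γ * S0 ^ 2 * (Rport V0 ν D K β ω - θ)) •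
        (ContinuousLinearMap.snd ℝ (EuclideanSpace ℝ (Fin m)) ℝ) with hF'def
  -- measurability of the pieces
  have hsgm : ∀ j, AEStronglyMeasurable (fun ω => Real.sign ⟪K j ω, β⟫_ℝ • K j ω) P := by
    intro j
    exact ((measurable_realSign.comp_aemeasurable
      (hinnm β (K j) (hKm j)).aemeasurable).aestronglyMeasurable).smul (hKm j)
  have hwm : AEStronglyMeasurable w P := by
    rw [hwdef]
    exact hDm.sub ((Finset.aestronglyMeasurable_fun_sum _ fun j _ => hsgm j).const_smul ν)
  have hw2 : MemLp w 2 P := by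
    rw [hwdef]
    refine (hD 2 one_le_two).sub ?_
    refine (memLp_finset_sum (f := fun j ω => Real.sign ⟪K j ω, β⟫_ℝ • K j ω) _ fun j _ => ?_).const_smul ν
    refine MemLp.of_le (hK j 2 one_le_two) (hsgm j) (ae_of_all _ fun ω => ?_)
    rw [norm_smul, Real.norm_eq_abs]
    calc |Real.sign ⟪K j ω, β⟫_ℝ| * ‖K j ω‖ ≤ 1 * ‖K j ω‖ :=
          mul_le_mul_of_nonneg_right (abs_realSign_le_one _) (norm_nonneg _)
      _ = ‖K j ω‖ := one_mul _
  have ha2 : MemLp a 2 P := by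
    rw [hadef]
    exact ((memLp_const (1 : ℝ)).sub
      (((hRp2 β).sub (memLp_const θ)).const_mul (2 * γ * S0))).const_mul S0
  have ham : AEStronglyMeasurable a P := ha2.aestronglyMeasurable
  have hF'meas : AEStronglyMeasurable F' P := by
    rw [hF'def]
    refine AEStronglyMeasurable.add (ham.smul ?_) (AEStronglyMeasurable.smul_const ?_
      _)
    · exact ((innerSL ℝ).continuous.clm_comp continuous_const).comp_aestronglyMeasurable hwm
    · exact ((hRp2 β).aestronglyMeasurable.sub aestronglyMeasurable_const).const_mul
        (2 * γ * S0 ^ 2)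
  have hF_meas : ∀ p ∈ Metric.ball ((β, θ) : EuclideanSpace ℝ (Fin m) × ℝ) 1,
      AEStronglyMeasurable (F p) P := by
    intro p _
    rw [hFdef]
    refine ((hRm p.1).mul_const S0).sub (AEStronglyMeasurable.const_mul ?_ γ)
    simp only [pow_two]
    have h1 : AEStronglyMeasurable (fun ω => (Rport V0 ν D K p.1 ω - p.2) * S0) P :=
      ((hRm p.1).sub aestronglyMeasurable_const).mul_const S0
    exact h1.mul h1
  have hF_int : Integrable (F (β, θ)) P := by
    rw [hFdef]
    refine (hRint.mul_const S0).sub (Integrable.const_mul ?_ γ)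
    have h2 : Integrable (fun ω => (Rport V0 ν D K β ω - θ) ^ 2 * S0 ^ 2) P :=
      (((hRp2 β).sub (memLp_const θ)).integrable_sq).mul_const (S0 ^ 2)
    simp only [mul_pow]
    exact h2
  -- the Lipschitz bound
  set A : ℝ := V0 + |θ| + ‖β‖ + 2 with hAdef
  set bound : Ω → ℝ := fun ω => S0 * L ω + 2 * γ * S0 ^ 2 * A * (1 + L ω) ^ 2 with hbd
  have hbound_int : Integrable bound P := by
    rw [hbd]
    exact (hL1.const_mul S0).add (hL1sq.const_mul (2 * γ * S0 ^ 2 * A))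
  have h_lip : ∀ᵐ ω ∂P, ∀ p ∈ Metric.ball ((β, θ) : EuclideanSpace ℝ (Fin m) × ℝ) 1,
      ‖F p ω - F (β, θ) ω‖ ≤ bound ω * ‖p - (β, θ)‖ := by
    refine ae_of_all _ fun ω p hp => ?_
    obtain ⟨b, t⟩ := p
    set x := Rport V0 ν D K b ω with hx
    set y := Rport V0 ν D K β ω with hy
    set dp := ‖((b, t) : EuclideanSpace ℝ (Fin m) × ℝ) - (β, θ)‖ with hdp
    have hdpnn : 0 ≤ dp := norm_nonneg _
    have hdp1 : dp ≤ 1 := by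
      rw [Metric.mem_ball, dist_eq_norm] at hp
      exact le_of_lt hp
    have hb1 : ‖b - β‖ ≤ dp := by
      have := norm_fst_le (((b, t) : EuclideanSpace ℝ (Fin m) × ℝ) - (β, θ))
      exact this
    have ht1 : |t - θ| ≤ dp := by
      have := norm_snd_le (((b, t) : EuclideanSpace ℝ (Fin m) × ℝ) - (β, θ))
      rw [← Real.norm_eq_abs]; exact this
    have hxy : |x - y| ≤ L ω * dp :=
      (hRlip b β ω).trans (mul_le_mul_of_nonneg_left hb1 (hLnn ω))
    have hbnorm : ‖b‖ ≤ ‖β‖ + 1 := by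
      have := norm_sub_norm_le b β
      linarith
    have hxb : |x| ≤ V0 + L ω * (‖β‖ + 1) :=
      (hRb b ω).trans (by nlinarith [hLnn ω])
    have hyb : |y| ≤ V0 + L ω * ‖β‖ := hRb β ω
    have htb : |t| ≤ |θ| + 1 := by
      have := abs_sub_abs_le_abs_sub t θ
      linarith
    have key : F (b, t) ω - F (β, θ) ω
        = S0 * (x - y) - γ * S0 ^ 2 * (((x - t) + (y - θ)) * ((x - t) - (y - θ))) := by
      rw [hFdef]; simp only; rw [← hx, ← hy]; ring
    rw [Real.norm_eq_abs, key]
    have e1 : |S0 * (x - y)| ≤ S0 * L ω * dp := by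
      rw [abs_mul, abs_of_pos hS0, mul_assoc]
      exact mul_le_mul_of_nonneg_left hxy (le_of_lt hS0)
    have e2 : |(x - t) + (y - θ)| ≤ 2 * A * (1 + L ω) := by
      have h5 : |(x - t) + (y - θ)| ≤ |x| + |y| + |t| + |θ| := by
        calc |(x - t) + (y - θ)| ≤ |x - t| + |y - θ| := abs_add_le _ _
          _ ≤ (|x| + |t|) + (|y| + |θ|) := add_le_add (abs_sub _ _) (abs_sub _ _)
          _ = |x| + |y| + |t| + |θ| := by ring
      rw [hAdef]
      nlinarith [hLnn ω, norm_nonneg β, abs_nonneg θ, hxb, hyb, htb, h5, hV0,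
        mul_nonneg (hLnn ω) (norm_nonneg β)]
    have e3 : |(x - t) - (y - θ)| ≤ (1 + L ω) * dp := by
      have h7 : (x - t) - (y - θ) = (x - y) + (θ - t) := by ring
      have h8 : |θ - t| ≤ dp := by rw [abs_sub_comm]; exact ht1
      rw [h7]
      calc |(x - y) + (θ - t)| ≤ |x - y| + |θ - t| := abs_add_le _ _
        _ ≤ L ω * dp + dp := add_le_add hxy h8
        _ = (1 + L ω) * dp := by ring
    have e4 : |γ * S0 ^ 2 * (((x - t) + (y - θ)) * ((x - t) - (y - θ)))|
        ≤ 2 * γ * S0 ^ 2 * A * (1 + L ω) ^ 2 * dp := by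
      simp only [abs_mul]
      rw [abs_of_pos hγ, abs_of_pos (pow_pos hS0 2)]
      have h6 : |(x - t) + (y - θ)| * |(x - t) - (y - θ)|
          ≤ (2 * A * (1 + L ω)) * ((1 + L ω) * dp) := by
        refine mul_le_mul e2 e3 (abs_nonneg _) ?_
        positivity
      calc γ * S0 ^ 2 * (|(x - t) + (y - θ)| * |(x - t) - (y - θ)|)
          ≤ γ * S0 ^ 2 * ((2 * A * (1 + L ω)) * ((1 + L ω) * dp)) :=
            mul_le_mul_of_nonneg_left h6 (by positivity)
        _ = 2 * γ * S0 ^ 2 * A * (1 + L ω) ^ 2 * dp := by ring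
    calc |S0 * (x - y) - γ * S0 ^ 2 * (((x - t) + (y - θ)) * ((x - t) - (y - θ)))|
        ≤ |S0 * (x - y)| + |γ * S0 ^ 2 * (((x - t) + (y - θ)) * ((x - t) - (y - θ)))| :=
          abs_sub _ _
      _ ≤ S0 * L ω * dp + 2 * γ * S0 ^ 2 * A * (1 + L ω) ^ 2 * dp := add_le_add e1 e4
      _ = bound ω * dp := by rw [hbd]; ring
  -- almost everywhere the inner products do not vanish
  have hae : ∀ᵐ ω ∂P, ∀ j, ⟪K j ω, β⟫_ℝ ≠ 0 := by
    rw [ae_all_iff]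
    intro j
    have h0 := hZ β hβ j
    rw [ae_iff]
    convert h0 using 2
    simp
  -- pointwise differentiability
  have h_diff : ∀ᵐ ω ∂P, HasFDerivAt (fun p => F p ω) (F' ω) (β, θ) := by
    filter_upwards [hae] with ω hω
    have hinner : HasFDerivAt (fun p : EuclideanSpace ℝ (Fin m) × ℝ => ⟪D ω, p.1⟫_ℝ)
        ((innerSL ℝ (D ω)).comp (ContinuousLinearMap.fst ℝ (EuclideanSpace ℝ (Fin m)) ℝ))
        (β, θ) :=
      ((innerSL ℝ (D ω)).hasFDerivAt).comp (β, θ) hasFDerivAt_fst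
    have habs : ∀ j : Fin q, HasFDerivAt
        (fun p : EuclideanSpace ℝ (Fin m) × ℝ => |⟪K j ω, p.1⟫_ℝ|)
        (Real.sign ⟪K j ω, β⟫_ℝ •
          ((innerSL ℝ (K j ω)).comp (ContinuousLinearMap.fst ℝ (EuclideanSpace ℝ (Fin m)) ℝ)))
        (β, θ) := by
      intro j
      exact (hasDerivAt_abs_realSign (hω j)).comp_hasFDerivAt (β, θ)
        (((innerSL ℝ (K j ω)).hasFDerivAt).comp (β, θ) hasFDerivAt_fst)
    have hsum : HasFDerivAt
        (fun p : EuclideanSpace ℝ (Fin m) × ℝ => ∑ j, |⟪K j ω, p.1⟫_ℝ|)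
        (∑ j, Real.sign ⟪K j ω, β⟫_ℝ •
          ((innerSL ℝ (K j ω)).comp (ContinuousLinearMap.fst ℝ (EuclideanSpace ℝ (Fin m)) ℝ)))
        (β, θ) := HasFDerivAt.fun_sum fun j _ => habs j
    set dR : (EuclideanSpace ℝ (Fin m) × ℝ) →L[ℝ] ℝ :=
      (innerSL ℝ (D ω)).comp (ContinuousLinearMap.fst ℝ (EuclideanSpace ℝ (Fin m)) ℝ) -
        ν • ∑ j, Real.sign ⟪K j ω, β⟫_ℝ •
          ((innerSL ℝ (K j ω)).comp (ContinuousLinearMap.fst ℝ (EuclideanSpace ℝ (Fin m)) ℝ))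
      with hdRdef
    have hRfd : HasFDerivAt (fun p : EuclideanSpace ℝ (Fin m) × ℝ => Rport V0 ν D K p.1 ω)
        dR (β, θ) := by
      rw [hdRdef]
      have h1 : HasFDerivAt
          (fun p : EuclideanSpace ℝ (Fin m) × ℝ =>
            V0 + ⟪D ω, p.1⟫_ℝ - ν * ∑ j, |⟪K j ω, p.1⟫_ℝ|)
          (((innerSL ℝ (D ω)).comp (ContinuousLinearMap.fst ℝ (EuclideanSpace ℝ (Fin m)) ℝ)) -
            ν • (∑ j, Real.sign ⟪K j ω, β⟫_ℝ •
              ((innerSL ℝ (K j ω)).comp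
                (ContinuousLinearMap.fst ℝ (EuclideanSpace ℝ (Fin m)) ℝ)))) (β, θ) := by
        have h2 := ((hasFDerivAt_const V0 ((β, θ) : EuclideanSpace ℝ (Fin m) × ℝ)).fun_add
          hinner).fun_sub (hsum.const_mul ν)
        simpa using h2
      exact h1
    have hufd : HasFDerivAt
        (fun p : EuclideanSpace ℝ (Fin m) × ℝ => Rport V0 ν D K p.1 ω - p.2)
        (dR - ContinuousLinearMap.snd ℝ (EuclideanSpace ℝ (Fin m)) ℝ) (β, θ) :=
      hRfd.sub hasFDerivAt_snd
    have hFfd := (hRfd.mul_const S0).sub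
      ((((hufd.mul_const S0).mul (hufd.mul_const S0))).const_mul γ)
    have hFeq : (fun p : EuclideanSpace ℝ (Fin m) × ℝ => F p ω)
        = fun p => Rport V0 ν D K p.1 ω * S0 -
            γ * ((Rport V0 ν D K p.1 ω - p.2) * S0 * ((Rport V0 ν D K p.1 ω - p.2) * S0)) := by
      funext p
      rw [hFdef]
      ring
    rw [hFeq]
    refine hFfd.congr_fderiv ?_
    refine ContinuousLinearMap.ext fun v => ?_
    obtain ⟨h, s⟩ := v
    rw [hF'def, hdRdef]
    simp only [ContinuousLinearMap.add_apply, ContinuousLinearMap.smul_apply,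
      ContinuousLinearMap.coe_comp', Function.comp_apply, ContinuousLinearMap.coe_fst',
      ContinuousLinearMap.coe_snd', ContinuousLinearMap.sub_apply,
      ContinuousLinearMap.coe_sum', Finset.sum_apply, innerSL_apply_apply, smul_eq_mul,
      hwdef, inner_sub_left, real_inner_smul_left, sum_inner, hadef]
    ring
  -- differentiation under the integral sign
  obtain ⟨hF'int, hfd⟩ :=
    hasFDerivAt_integral_of_dominated_loc_of_lip' (μ := P) (𝕜 := ℝ) (F := F) (F' := F')
      (bound := bound) (Metric.ball_mem_nhds _ zero_lt_one) hF_meas hF_int hF'meas h_lip hbound_int h_diff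
  refine ⟨hfd.differentiableAt, ?_, ?_⟩
  · -- gradient in β
    rw [hasGradientAt_iff_hasFDerivAt]
    have hemb : HasFDerivAt
        (fun b : EuclideanSpace ℝ (Fin m) => ((b, θ) : EuclideanSpace ℝ (Fin m) × ℝ))
        ((ContinuousLinearMap.id ℝ (EuclideanSpace ℝ (Fin m))).prod 0) β :=
      (hasFDerivAt_id β).prodMk (hasFDerivAt_const θ β)
    have hcomp := hfd.comp β hemb
    have haw : Integrable (fun ω => a ω • w ω) P :=
      memLp_one_iff_integrable.mp (hw2.smul ha2 (r := 1) (hpqr := ⟨by simp [one_div, ENNReal.inv_two_add_inv_two]⟩))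
    have hkey : (∫ ω, F' ω ∂P).comp
          ((ContinuousLinearMap.id ℝ (EuclideanSpace ℝ (Fin m))).prod 0)
        = (InnerProductSpace.toDual ℝ (EuclideanSpace ℝ (Fin m))) (∫ ω, a ω • w ω ∂P) := by
      refine ContinuousLinearMap.ext fun h => ?_
      rw [InnerProductSpace.toDual_apply_apply, ContinuousLinearMap.comp_apply]
      have hid : ((ContinuousLinearMap.id ℝ (EuclideanSpace ℝ (Fin m))).prod 0) h
          = ((h, 0) : EuclideanSpace ℝ (Fin m) × ℝ) := rfl
      rw [hid, ContinuousLinearMap.integral_apply hF'int]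
      have h1 : ∀ ω, F' ω ((h, 0) : EuclideanSpace ℝ (Fin m) × ℝ) = ⟪a ω • w ω, h⟫_ℝ := by
        intro ω
        rw [hF'def]
        simp [real_inner_smul_left, Finset.mul_sum, mul_assoc]
      rw [integral_congr_ae (ae_of_all _ h1)]
      calc ∫ ω, ⟪a ω • w ω, h⟫_ℝ ∂P = ∫ ω, ⟪h, a ω • w ω⟫_ℝ ∂P :=
            integral_congr_ae (ae_of_all _ fun ω => real_inner_comm _ _)
        _ = ⟪h, ∫ ω, a ω • w ω ∂P⟫_ℝ := integral_inner haw h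
        _ = ⟪∫ ω, a ω • w ω ∂P, h⟫_ℝ := real_inner_comm _ _
    rw [hkey] at hcomp
    exact hcomp
  · -- derivative in θ
    have hemb2 : HasDerivAt (fun t : ℝ => ((β, t) : EuclideanSpace ℝ (Fin m) × ℝ))
        (((0 : EuclideanSpace ℝ (Fin m)), (1 : ℝ))) θ :=
      (hasDerivAt_const θ β).prodMk (hasDerivAt_id θ)
    have hcomp := hfd.comp_hasDerivAt θ hemb2
    have hval : (∫ ω, F' ω ∂P) (((0 : EuclideanSpace ℝ (Fin m)), (1 : ℝ)))
        = 2 * γ * S0 ^ 2 * ((∫ ω, Rport V0 ν D K β ω ∂P) - θ) := by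
      rw [ContinuousLinearMap.integral_apply hF'int]
      have h1 : ∀ ω, F' ω (((0 : EuclideanSpace ℝ (Fin m)), (1 : ℝ)))
          = 2 * γ * S0 ^ 2 * (Rport V0 ν D K β ω - θ) := by
        intro ω
        rw [hF'def]
        simp
      rw [integral_congr_ae (ae_of_all _ h1), integral_const_mul,
        integral_sub hRint (integrable_const θ), integral_const]
      simp [measure_univ]
    rw [hval] at hcomp
    exact hcomp
end
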